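/- For every odd prime p with p ≡ 1 (mod 2) and 2 dividing p − 1 (which always holds), there exists a group of order 2·p^2 that is not 2-generated; hence n = 2·p^2 is never a 2-generated number for odd primes p. -/

import Mathlib

namespace Stmt19

open SemidirectProduct

variable (p : ℕ)

abbrev V (p : ℕ) := Multiplicative (ZMod p × ZMod p)

def ι : MulAut (V p) := MulEquiv.inv (V p)

lemma ι_sq : (ι p) ^ 2 = 1 := by
  ext n
  all_goals simp [ι, pow_succ]

lemma zmod2_cases : ∀ z : ZMod 2, z = 0 ∨ z = 1 := by decide

def φ : Multiplicative (ZMod 2) →* MulAut (V p) where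
  toFun x := ι p ^ (x.toAdd.val)
  map_one' := by norm_num
  map_mul' x y := by
    have h2 := ι_sq p
    have v0 : ((0 : ZMod 2) + 0).val = 0 := rfl
    have v1 : ((0 : ZMod 2) + 1).val = 1 := rfl
    have v2 : ((1 : ZMod 2) + 0).val = 1 := rfl
    have v3 : ((1 : ZMod 2) + 1).val = 0 := rfl
    rcases zmod2_cases x.toAdd with h | h <;> rcases zmod2_cases y.toAdd with h' | h' <;>
      simp only [toAdd_mul, h, h', v0, v1, v2, v3] <;>
      simp [pow_zero, pow_one, ← pow_two, h2, ZMod.val_zero, ZMod.val_one]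

abbrev G (p : ℕ) := SemidirectProduct (V p) (Multiplicative (ZMod 2)) (φ p)

lemma phi_apply (x : Multiplicative (ZMod 2)) (n : V p) :
    (φ p x n).toAdd = if x.toAdd = 0 then n.toAdd else -n.toAdd := by
  rcases zmod2_cases x.toAdd with h | h <;>
    simp [φ, ι, h, ZMod.val_zero, ZMod.val_one, pow_zero, pow_one]

def K (α β c : ZMod p) : Subgroup (G p) where
  carrier := {g | α * g.left.toAdd.1 + β * g.left.toAdd.2 = c * ((g.right.toAdd.val : ℕ) : ZMod p)}
  one_mem' := by
    simp [SemidirectProduct.one_left, SemidirectProduct.one_right]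
  mul_mem' := by
    intro g h hg hh
    simp only [Set.mem_setOf_eq] at hg hh ⊢
    rw [SemidirectProduct.mul_left, SemidirectProduct.mul_right, toAdd_mul, toAdd_mul, phi_apply]
    have v0 : ((0 : ZMod 2) + 0).val = 0 := rfl
    have v1 : ((0 : ZMod 2) + 1).val = 1 := rfl
    have v2 : ((1 : ZMod 2) + 0).val = 1 := rfl
    have v3 : ((1 : ZMod 2) + 1).val = 0 := rfl
    rcases zmod2_cases g.right.toAdd with h1 | h1 <;> rcases zmod2_cases h.right.toAdd with h2 | h2 <;>
      rw [h1] at hg ⊢ <;> rw [h2] at hh ⊢ <;>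
      simp only [v0, v1, v2, v3, ZMod.val_zero, ZMod.val_one, Nat.cast_zero, Nat.cast_one,
        if_pos rfl, Prod.fst_add, Prod.snd_add, Prod.fst_neg, Prod.snd_neg,
        if_true, ite_true, if_neg (show (1 : ZMod 2) ≠ 0 by decide)] at hg hh ⊢ <;>
      first
        | linear_combination hg + hh
        | linear_combination hg - hh
  inv_mem' := by
    intro g hg
    simp only [Set.mem_setOf_eq] at hg ⊢
    rw [SemidirectProduct.inv_left, SemidirectProduct.inv_right, phi_apply]
    have hneg : ∀ z : ZMod 2, -z = z := by decide
    rcases zmod2_cases g.right.toAdd with h1 | h1 <;>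
      rw [h1] at hg <;>
      simp only [toAdd_inv, hneg, h1, ZMod.val_zero, ZMod.val_one, Nat.cast_zero, Nat.cast_one,
        if_pos rfl, neg_neg, Prod.fst_neg, Prod.snd_neg,
        if_true, ite_true, if_neg (show (1 : ZMod 2) ≠ 0 by decide)] at hg ⊢ <;>
      first
        | linear_combination hg
        | linear_combination -hg

lemma mem_K (α β c : ZMod p) (g : G p) :
    g ∈ K p α β c ↔
      α * g.left.toAdd.1 + β * g.left.toAdd.2 = c * ((g.right.toAdd.val : ℕ) : ZMod p) :=
  by exact Iff.rfl

variable [Fact p.Prime]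

lemma K_ne_top (α β c : ZMod p) (h : ¬(α = 0 ∧ β = 0)) : K p α β c ≠ ⊤ := by
  intro ht
  by_cases hα : α = 0
  · have hβ : β ≠ 0 := fun hb => h ⟨hα, hb⟩
    have hm : (⟨Multiplicative.ofAdd ((0 : ZMod p), 1), 1⟩ : G p) ∈ K p α β c := by
      rw [ht]; exact Subgroup.mem_top _
    rw [mem_K] at hm
    simp [hα] at hm
    exact hβ hm
  · have hm : (⟨Multiplicative.ofAdd ((1 : ZMod p), 0), 1⟩ : G p) ∈ K p α β c := by
      rw [ht]; exact Subgroup.mem_top _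
    rw [mem_K] at hm
    simp at hm
    exact hα hm

lemma exists_funct (z : ZMod p × ZMod p) :
    ∃ α β : ZMod p, ¬(α = 0 ∧ β = 0) ∧ α * z.1 + β * z.2 = 0 := by
  by_cases hz : z = 0
  · exact ⟨1, 0, by simp, by simp [hz]⟩
  · refine ⟨z.2, -z.1, ?_, by ring⟩
    rintro ⟨h1, h2⟩
    exact hz (Prod.ext (neg_eq_zero.mp h2) h1)

lemma exists_proper (a b : G p) :
    ∃ K' : Subgroup (G p), a ∈ K' ∧ b ∈ K' ∧ K' ≠ ⊤ := by
  rcases zmod2_cases a.right.toAdd with ha | ha <;> rcases zmod2_cases b.right.toAdd with hb | hb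
  · -- both trivial: use ker rightHom
    refine ⟨(rightHom : G p →* Multiplicative (ZMod 2)).ker, ?_, ?_, ?_⟩
    · rw [MonoidHom.mem_ker]
      exact Multiplicative.toAdd.injective (by simpa using ha)
    · rw [MonoidHom.mem_ker]
      exact Multiplicative.toAdd.injective (by simpa using hb)
    · intro ht
      have : (inr (Multiplicative.ofAdd (1 : ZMod 2)) : G p) ∈
          (rightHom : G p →* Multiplicative (ZMod 2)).ker := by
        rw [ht]; exact Subgroup.mem_top _
      rw [MonoidHom.mem_ker, rightHom_inr] at this
      have h1 : (1 : ZMod 2) = 0 := by simpa using congrArg Multiplicative.toAdd this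
      exact absurd h1 (by decide)
  · obtain ⟨α, β, h0, hz⟩ := exists_funct p a.left.toAdd
    refine ⟨K p α β (α * b.left.toAdd.1 + β * b.left.toAdd.2), ?_, ?_, K_ne_top p _ _ _ h0⟩
    · rw [mem_K, ha]; simpa using hz
    · rw [mem_K, hb]; simp [ZMod.val_one]
  · obtain ⟨α, β, h0, hz⟩ := exists_funct p b.left.toAdd
    refine ⟨K p α β (α * a.left.toAdd.1 + β * a.left.toAdd.2), ?_, ?_, K_ne_top p _ _ _ h0⟩
    · rw [mem_K, ha]; simp [ZMod.val_one]
    · rw [mem_K, hb]; simpa using hz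
  · obtain ⟨α, β, h0, hz⟩ := exists_funct p (a.left.toAdd - b.left.toAdd)
    refine ⟨K p α β (α * a.left.toAdd.1 + β * a.left.toAdd.2), ?_, ?_, K_ne_top p _ _ _ h0⟩
    · rw [mem_K, ha]; simp [ZMod.val_one]
    · rw [mem_K, hb]
      simp only [ZMod.val_one, Nat.cast_one, mul_one]
      simp only [Prod.fst_sub, Prod.snd_sub] at hz
      linear_combination -hz

def e : G p ≃ (ZMod p × ZMod p) × ZMod 2 where
  toFun g := (g.left.toAdd, g.right.toAdd)
  invFun x := ⟨Multiplicative.ofAdd x.1, Multiplicative.ofAdd x.2⟩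
  left_inv _ := rfl
  right_inv _ := rfl

end Stmt19

/-- For every odd prime `p`, there exists a group of order `2 * p ^ 2` that is not 2-generated;
hence `n = 2 * p ^ 2` is never a 2-generated number for odd primes `p`. -/
theorem stmt_19 (p : ℕ) (hp : p.Prime) (hodd : Odd p) :
    ¬ ∀ (G : Type) [Group G] [Finite G], Nat.card G = 2 * p ^ 2 →
      ∃ a b : G, Subgroup.closure {a, b} = ⊤ := by
  intro h
  haveI : Fact p.Prime := ⟨hp⟩
  haveI : NeZero p := ⟨hp.ne_zero⟩
  haveI : Finite (Stmt19.G p) := Finite.of_equiv _ (Stmt19.e p).symm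
  have hcard : Nat.card (Stmt19.G p) = 2 * p ^ 2 := by
    rw [Nat.card_congr (Stmt19.e p), Nat.card_prod, Nat.card_prod, Nat.card_zmod,
      Nat.card_zmod]
    ring
  obtain ⟨a, b, hab⟩ := h (Stmt19.G p) hcard
  obtain ⟨K', haK, hbK, hne⟩ := Stmt19.exists_proper p a b
  apply hne
  rw [eq_top_iff, ← hab]
  exact (Subgroup.closure_le K').2 (by
    rw [Set.insert_subset_iff, Set.singleton_subset_iff]
    exact ⟨haK, hbK⟩)
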